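/- Let (X,B,m) be a σ-finite measure space with m(X)=∞, T:X→X an invertible, conservative, ergodic, measure-preserving transformation, and Ω∈B with m(Ω)=1. For s>0 set u(s) := Σ_{n≥0} e^{-sn}·m(Ω ∩ T^{-n}Ω), U_s := Σ_{n≥0} e^{-sn}·1_Ω∘T^n, and U_s^- := Σ_{n≥0} e^{-sn}·1_Ω∘T^{-n}. Assume that, as s→0+, U_s^- /u(s) → 1 in measure on Ω, and the essential supremum over Ω of U_s^- /u(s) tends to 1. Then for every p∈ℕ: ∫_Ω U_s^p dm ~ p!·∏_{k=1}^{p} u(ks) as s→0+. -/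

import Mathlib

open MeasureTheory Filter Set Topology ENNReal

/-- `u(s) = Σ_{n≥0} e^{-sn} m(Ω ∩ T^{-n}Ω)`. -/
noncomputable def uFn {X : Type*} [MeasurableSpace X] (m : MeasureTheory.Measure X)
    (S : X → X) (Ω : Set X) (s : ℝ) : ℝ≥0∞ :=
  ∑' n : ℕ, ENNReal.ofReal (Real.exp (-(s * n))) * m (Ω ∩ S^[n] ⁻¹' Ω)

/-- `U_s = Σ_{n≥0} e^{-sn} 1_Ω ∘ S^n`. -/
noncomputable def UFn {X : Type*} (S : X → X) (Ω : Set X) (s : ℝ) (x : X) : ℝ≥0∞ :=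
  ∑' n : ℕ, ENNReal.ofReal (Real.exp (-(s * n))) * Ω.indicator (1 : X → ℝ≥0∞) (S^[n] x)

open scoped NNReal

/-- `(a+c)^(k+1) ≤ a^(k+1) + (k+1)·c·(a+c)^k` in `ℝ≥0∞`. -/
lemma powA (a c : ℝ≥0∞) : ∀ k : ℕ, (a + c) ^ (k+1) ≤ a ^ (k+1) + (k+1) * c * (a + c) ^ k := by
  intro k
  induction k with
  | zero => simp [add_comm, mul_comm]
  | succ k ih =>
    have h3 : c * a^(k+1) ≤ c * (a+c)^(k+1) :=
      mul_le_mul_right (pow_le_pow_left' (le_add_right le_rfl) _) _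
    calc (a + c) ^ (k+2) = (a + c) * (a + c) ^ (k+1) := by ring
      _ ≤ (a + c) * (a ^ (k+1) + (k+1) * c * (a + c) ^ k) := mul_le_mul_right ih _
      _ = a * a^(k+1) + c * a^(k+1) + (k+1) * c * (a+c)^(k+1) := by ring
      _ ≤ a ^ (k+2) + c * (a+c)^(k+1) + (k+1) * c * (a+c)^(k+1) := by
          refine add_le_add (add_le_add (le_of_eq (by ring)) h3) le_rfl
      _ = (a:ℝ≥0∞) ^ (k+2) + (↑(k+1) + 1) * c * (a + c) ^ (k+1) := by push_cast; ring

/-- `a^(k+1) + (k+1)·c·a^k ≤ (a+c)^(k+1)` in `ℝ≥0∞`. -/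
lemma powB (a c : ℝ≥0∞) : ∀ k : ℕ, a ^ (k+1) + (k+1) * c * a ^ k ≤ (a + c) ^ (k+1) := by
  intro k
  induction k with
  | zero => simp [add_comm, mul_comm]
  | succ k ih =>
    have h2 : a * (a^(k+1) + (k+1)*c*a^k) ≤ a * (a+c)^(k+1) := mul_le_mul_right ih _
    have h3 : c * a^(k+1) ≤ c * (a+c)^(k+1) :=
      mul_le_mul_right (pow_le_pow_left' (le_add_right le_rfl) _) _
    calc a ^ (k+2) + (↑(k+1) + 1) * c * a ^ (k+1)
        = a * (a^(k+1) + (k+1) * c * a^k) + c * a^(k+1) := by push_cast; ring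
      _ ≤ a * (a+c)^(k+1) + c * (a+c)^(k+1) := add_le_add h2 h3
      _ = (a + c) ^ (k+2) := by ring



section tel
variable (c : ℕ → ℝ≥0∞)

lemma Vsplit (n : ℕ) : (∑' m : ℕ, c (n + m)) = (∑' m : ℕ, c (n + 1 + m)) + c n := by
  rw [tsum_eq_zero_add' ENNReal.summable, add_comm]
  congr 1
  exact tsum_congr fun m => by ring_nf

lemma Vzero : (∑' m : ℕ, c (0 + m)) = ∑' m, c m :=
  tsum_congr fun m => by rw [zero_add]

lemma Vle (n : ℕ) : (∑' m : ℕ, c (n + m)) ≤ ∑' m, c m :=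
  Summable.tsum_le_tsum_of_inj (fun m => n + m) (add_right_injective n) (fun _ _ => zero_le)
    (fun m => le_rfl) ENNReal.summable ENNReal.summable

lemma Vtendsto (hc : (∑' m, c m) ≠ ⊤) :
    Filter.Tendsto (fun n => ∑' m : ℕ, c (n + m)) atTop (𝓝 0) := by
  have := ENNReal.tendsto_sum_nat_add c hc
  convert this using 2 with n
  exact tsum_congr fun m => by rw [add_comm]

lemma tel_upper (hc : (∑' m, c m) ≠ ⊤) (p : ℕ) :
    (∑' m, c m) ^ (p+1) ≤ ((p:ℝ≥0∞)+1) * ∑' n, c n * (∑' m : ℕ, c (n + m)) ^ p := by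
  have hpart : ∀ N : ℕ, (∑' m, c m) ^ (p+1) ≤
      (∑' m : ℕ, c (N + m)) ^ (p+1) +
        ((p:ℝ≥0∞)+1) * ∑ n ∈ Finset.range N, c n * (∑' m : ℕ, c (n + m)) ^ p := by
    intro N
    induction N with
    | zero => simp [Vzero c]
    | succ N ih =>
      refine ih.trans ?_
      have key : (∑' m : ℕ, c (N + m)) ^ (p+1) ≤
          (∑' m : ℕ, c (N + 1 + m)) ^ (p+1) +
            ((p:ℝ≥0∞)+1) * (c N * (∑' m : ℕ, c (N + m)) ^ p) := by
        have h := powA (∑' m : ℕ, c (N + 1 + m)) (c N) p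
        rw [← Vsplit] at h
        refine h.trans (le_of_eq ?_)
        push_cast
        ring
      calc (∑' m : ℕ, c (N + m)) ^ (p+1)
            + ((p:ℝ≥0∞)+1) * ∑ n ∈ Finset.range N, c n * (∑' m : ℕ, c (n + m)) ^ p
          ≤ ((∑' m : ℕ, c (N + 1 + m)) ^ (p+1)
              + ((p:ℝ≥0∞)+1) * (c N * (∑' m : ℕ, c (N + m)) ^ p))
            + ((p:ℝ≥0∞)+1) * ∑ n ∈ Finset.range N, c n * (∑' m : ℕ, c (n + m)) ^ p :=
            add_le_add_left key _
        _ = (∑' m : ℕ, c (N + 1 + m)) ^ (p+1)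
            + ((p:ℝ≥0∞)+1) * ∑ n ∈ Finset.range (N+1), c n * (∑' m : ℕ, c (n + m)) ^ p := by
            rw [Finset.sum_range_succ]; ring
  have hA : Tendsto (fun N => (∑' m : ℕ, c (N + m)) ^ (p+1)) atTop (𝓝 0) := by
    have h0 := Vtendsto c hc
    have hb : ∀ N : ℕ, (∑' m : ℕ, c (N + m)) ^ (p+1) ≤
        (∑' m, c m)^p * (∑' m : ℕ, c (N + m)) := fun N => by
      calc (∑' m : ℕ, c (N + m)) ^ (p+1) = (∑' m : ℕ, c (N + m))^p * (∑' m : ℕ, c (N + m)) := by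
            ring
        _ ≤ (∑' m, c m)^p * (∑' m : ℕ, c (N + m)) :=
            mul_le_mul_left (pow_le_pow_left' (Vle c N) p) _
    have hmul : Tendsto (fun N => (∑' m, c m)^p * (∑' m : ℕ, c (N + m))) atTop (𝓝 0) := by
      have := ENNReal.Tendsto.const_mul (a := (∑' m, c m)^p) h0 (Or.inr (ENNReal.pow_ne_top hc))
      simpa using this
    exact tendsto_of_tendsto_of_tendsto_of_le_of_le tendsto_const_nhds hmul
      (fun n => zero_le) hb
  have hfin : ((p:ℝ≥0∞)+1) ≠ ⊤ := ENNReal.add_ne_top.2 ⟨ENNReal.natCast_ne_top p, one_ne_top⟩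
  have hlim : Tendsto (fun N => (∑' m : ℕ, c (N + m)) ^ (p+1)
      + ((p:ℝ≥0∞)+1) * ∑ n ∈ Finset.range N, c n * (∑' m : ℕ, c (n + m)) ^ p) atTop
      (𝓝 (0 + ((p:ℝ≥0∞)+1) * ∑' n, c n * (∑' m : ℕ, c (n + m)) ^ p)) :=
    hA.add (ENNReal.Tendsto.const_mul (ENNReal.tendsto_nat_tsum _) (Or.inr hfin))
  rw [zero_add] at hlim
  exact ge_of_tendsto' hlim hpart

lemma tel_lower (p : ℕ) :
    ((p:ℝ≥0∞)+1) * ∑' n, c n * (∑' m : ℕ, c (n + 1 + m)) ^ p ≤ (∑' m, c m) ^ (p+1) := by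
  have hpart : ∀ N : ℕ,
      ((p:ℝ≥0∞)+1) * (∑ n ∈ Finset.range N, c n * (∑' m : ℕ, c (n + 1 + m)) ^ p)
        ≤ (∑' m, c m) ^ (p+1) := by
    intro N
    have key : ∀ N : ℕ,
        ((p:ℝ≥0∞)+1) * (∑ n ∈ Finset.range N, c n * (∑' m : ℕ, c (n + 1 + m)) ^ p)
          + (∑' m : ℕ, c (N + m)) ^ (p+1) ≤ (∑' m : ℕ, c (0 + m)) ^ (p+1) := by
      intro N
      induction N with
      | zero => simp
      | succ N ih =>
        refine le_trans ?_ ih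
        rw [Finset.sum_range_succ]
        have h := powB (∑' m : ℕ, c (N + 1 + m)) (c N) p
        rw [← Vsplit] at h
        calc ((p:ℝ≥0∞)+1) * (∑ n ∈ Finset.range N, c n * (∑' m : ℕ, c (n + 1 + m)) ^ p
              + c N * (∑' m : ℕ, c (N + 1 + m)) ^ p) + (∑' m : ℕ, c (N + 1 + m)) ^ (p+1)
            = ((p:ℝ≥0∞)+1) * (∑ n ∈ Finset.range N, c n * (∑' m : ℕ, c (n + 1 + m)) ^ p)
              + ((∑' m : ℕ, c (N + 1 + m)) ^ (p+1)
                + ((p:ℝ≥0∞)+1) * c N * (∑' m : ℕ, c (N + 1 + m)) ^ p) := by push_cast; ring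
          _ ≤ ((p:ℝ≥0∞)+1) * (∑ n ∈ Finset.range N, c n * (∑' m : ℕ, c (n + 1 + m)) ^ p)
              + (∑' m : ℕ, c (N + m)) ^ (p+1) := by
              refine add_le_add_right ?_ _
              exact le_trans (le_of_eq (by push_cast; ring)) h
    refine le_trans (le_add_right le_rfl) (le_trans (key N) (le_of_eq (by rw [Vzero])))
  have hlim : Tendsto (fun N =>
      ((p:ℝ≥0∞)+1) * ∑ n ∈ Finset.range N, c n * (∑' m : ℕ, c (n + 1 + m)) ^ p) atTop
      (𝓝 (((p:ℝ≥0∞)+1) * ∑' n, c n * (∑' m : ℕ, c (n + 1 + m)) ^ p)) :=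
    ENNReal.Tendsto.const_mul (ENNReal.tendsto_nat_tsum _)
      (Or.inr (ENNReal.add_ne_top.2 ⟨ENNReal.natCast_ne_top p, one_ne_top⟩))
  exact le_of_tendsto' hlim hpart

lemma tel_mid (q : ℕ) :
    (∑' n, c n * (∑' m : ℕ, c (n + m)) ^ (q+1)) ≤
      (∑' n, c n * (∑' m : ℕ, c (n + 1 + m)) ^ (q+1))
        + ((q:ℝ≥0∞)+1) * ∑' n, (c n)^2 * (∑' m : ℕ, c (n + m)) ^ q := by
  have hpt : ∀ n, c n * (∑' m : ℕ, c (n + m)) ^ (q+1) ≤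
      c n * (∑' m : ℕ, c (n + 1 + m)) ^ (q+1)
        + ((q:ℝ≥0∞)+1) * ((c n)^2 * (∑' m : ℕ, c (n + m)) ^ q) := by
    intro n
    have h := powA (∑' m : ℕ, c (n + 1 + m)) (c n) q
    rw [← Vsplit] at h
    calc c n * (∑' m : ℕ, c (n + m)) ^ (q+1)
        ≤ c n * ((∑' m : ℕ, c (n + 1 + m)) ^ (q+1)
            + ((q:ℝ≥0∞)+1) * c n * (∑' m : ℕ, c (n + m)) ^ q) := mul_le_mul_right h _
      _ = c n * (∑' m : ℕ, c (n + 1 + m)) ^ (q+1)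
            + ((q:ℝ≥0∞)+1) * ((c n)^2 * (∑' m : ℕ, c (n + m)) ^ q) := by ring
  calc (∑' n, c n * (∑' m : ℕ, c (n + m)) ^ (q+1))
      ≤ ∑' n, (c n * (∑' m : ℕ, c (n + 1 + m)) ^ (q+1)
          + ((q:ℝ≥0∞)+1) * ((c n)^2 * (∑' m : ℕ, c (n + m)) ^ q)) := Summable.tsum_le_tsum hpt
        ENNReal.summable ENNReal.summable
    _ = (∑' n, c n * (∑' m : ℕ, c (n + 1 + m)) ^ (q+1))
          + ((q:ℝ≥0∞)+1) * ∑' n, (c n)^2 * (∑' m : ℕ, c (n + m)) ^ q := by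
        rw [ENNReal.tsum_add, ENNReal.tsum_mul_left]

/-- combined lower recursion. -/
lemma tel_lower' (q : ℕ) :
    ((q:ℝ≥0∞)+2) * ∑' n, c n * (∑' m : ℕ, c (n + m)) ^ (q+1) ≤
      (∑' m, c m) ^ (q+2)
        + ((q:ℝ≥0∞)+2) * (((q:ℝ≥0∞)+1) * ∑' n, (c n)^2 * (∑' m : ℕ, c (n + m)) ^ q) := by
  have h1 := tel_mid c q
  have h2 := tel_lower c (q+1)
  calc ((q:ℝ≥0∞)+2) * ∑' n, c n * (∑' m : ℕ, c (n + m)) ^ (q+1)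
      ≤ ((q:ℝ≥0∞)+2) * ((∑' n, c n * (∑' m : ℕ, c (n + 1 + m)) ^ (q+1))
          + ((q:ℝ≥0∞)+1) * ∑' n, (c n)^2 * (∑' m : ℕ, c (n + m)) ^ q) := mul_le_mul_right h1 _
    _ = ((q:ℝ≥0∞)+2) * (∑' n, c n * (∑' m : ℕ, c (n + 1 + m)) ^ (q+1))
          + ((q:ℝ≥0∞)+2) * (((q:ℝ≥0∞)+1) * ∑' n, (c n)^2 * (∑' m : ℕ, c (n + m)) ^ q) := by ring
    _ ≤ (∑' m, c m) ^ (q+2)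
          + ((q:ℝ≥0∞)+2) * (((q:ℝ≥0∞)+1) * ∑' n, (c n)^2 * (∑' m : ℕ, c (n + m)) ^ q) := by
        refine add_le_add_left ?_ _
        refine le_trans (le_of_eq ?_) h2
        push_cast; ring
end tel


noncomputable def eE (s : ℝ) (n : ℕ) : ℝ≥0∞ := ENNReal.ofReal (Real.exp (-(s * n)))

lemma eE_zero (s : ℝ) : eE s 0 = 1 := by simp [eE]

lemma eE_zero_s (n : ℕ) : eE 0 n = 1 := by simp [eE]

lemma eE_add (s : ℝ) (n m : ℕ) : eE s (n + m) = eE s n * eE s m := by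
  rw [eE, eE, eE, ← ENNReal.ofReal_mul (Real.exp_pos _).le, ← Real.exp_add]
  push_cast
  ring_nf

lemma eE_pow (s : ℝ) (n k : ℕ) : eE s n ^ k = eE ((k : ℝ) * s) n := by
  rw [eE, eE, ← ENNReal.ofReal_pow (Real.exp_pos _).le, ← Real.exp_nat_mul]
  ring_nf

lemma eE_mono_s {s t : ℝ} (h : s ≤ t) (n : ℕ) : eE t n ≤ eE s n := by
  refine ENNReal.ofReal_le_ofReal (Real.exp_le_exp.2 ?_)
  have : (0:ℝ) ≤ n := Nat.cast_nonneg n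
  nlinarith

lemma eE_mono_n {s : ℝ} (hs : 0 ≤ s) {n N : ℕ} (h : n ≤ N) : eE s N ≤ eE s n := by
  refine ENNReal.ofReal_le_ofReal (Real.exp_le_exp.2 ?_)
  have : (n:ℝ) ≤ N := Nat.cast_le.2 h
  nlinarith

lemma eE_le_one {s : ℝ} (hs : 0 ≤ s) (n : ℕ) : eE s n ≤ 1 := by
  simpa [eE_zero] using eE_mono_n hs (Nat.zero_le n)

lemma eE_eq_geom (s : ℝ) (n : ℕ) : eE s n = (ENNReal.ofReal (Real.exp (-s))) ^ n := by
  rw [eE, ← ENNReal.ofReal_pow (Real.exp_pos _).le, ← Real.exp_nat_mul]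
  ring_nf

lemma tsum_eE (s : ℝ) : ∑' n, eE s n = (1 - ENNReal.ofReal (Real.exp (-s)))⁻¹ := by
  simp_rw [eE_eq_geom]
  exact ENNReal.tsum_geometric _

lemma tsum_eE_ne_top {s : ℝ} (hs : 0 < s) : (∑' n, eE s n) ≠ ⊤ := by
  rw [tsum_eE]
  rw [Ne, ENNReal.inv_eq_top, tsub_eq_zero_iff_le, not_le]
  exact ENNReal.ofReal_lt_one.2 (Real.exp_lt_one_iff.2 (by linarith))

section basics
variable {X : Type*} [MeasurableSpace X] (m : Measure X) (T : X ≃ᵐ X) (Ω : Set X)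

lemma ind_le_one (y : X) : Ω.indicator (1 : X → ℝ≥0∞) y ≤ 1 := by
  by_cases hy : y ∈ Ω <;> simp [hy]

lemma ind_sq (y : X) : Ω.indicator (1 : X → ℝ≥0∞) y ^ 2 = Ω.indicator (1 : X → ℝ≥0∞) y := by
  by_cases hy : y ∈ Ω <;> simp [hy]

lemma UFn_eq (S : X → X) (s : ℝ) (x : X) :
    UFn S Ω s x = ∑' n, eE s n * Ω.indicator (1 : X → ℝ≥0∞) (S^[n] x) := rfl

lemma uFn_eq (S : X → X) (s : ℝ) :
    uFn m S Ω s = ∑' n, eE s n * m (Ω ∩ S^[n] ⁻¹' Ω) := rfl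

lemma measurable_UFn {S : X → X} (hS : Measurable S) (hΩ : MeasurableSet Ω) (s : ℝ) :
    Measurable (UFn S Ω s) :=
  Measurable.ennreal_tsum fun n =>
    (measurable_const.mul ((measurable_one.indicator hΩ).comp (hS.iterate n)))

lemma UFn_le_tsum {s : ℝ} (S : X → X) (x : X) : UFn S Ω s x ≤ ∑' n, eE s n := by
  rw [UFn_eq]
  refine Summable.tsum_le_tsum (fun n => ?_) ENNReal.summable ENNReal.summable
  calc eE s n * Ω.indicator 1 (S^[n] x) ≤ eE s n * 1 := mul_le_mul_right (ind_le_one Ω _) _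
    _ = eE s n := mul_one _

lemma UFn_ne_top {s : ℝ} (hs : 0 < s) (S : X → X) (x : X) : UFn S Ω s x ≠ ⊤ :=
  fun h => tsum_eE_ne_top hs (top_le_iff.1 (h ▸ UFn_le_tsum Ω S x))

variable {Ω}

lemma one_le_uFn (hΩ1 : m Ω = 1) (s : ℝ) : 1 ≤ uFn m (⇑T) Ω s := by
  rw [uFn_eq]
  refine le_trans ?_ (ENNReal.le_tsum 0)
  simp [eE_zero, hΩ1]

lemma uFn_le_tsum (hΩ1 : m Ω = 1) (s : ℝ) : uFn m (⇑T) Ω s ≤ ∑' n, eE s n := by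
  rw [uFn_eq]
  refine Summable.tsum_le_tsum (fun n => ?_) ENNReal.summable ENNReal.summable
  calc eE s n * m (Ω ∩ (⇑T)^[n] ⁻¹' Ω) ≤ eE s n * m Ω :=
        mul_le_mul_right (measure_mono Set.inter_subset_left) _
    _ = eE s n := by rw [hΩ1, mul_one]

lemma uFn_ne_top (hΩ1 : m Ω = 1) {s : ℝ} (hs : 0 < s) : uFn m (⇑T) Ω s ≠ ⊤ :=
  fun h => tsum_eE_ne_top hs (top_le_iff.1 (h ▸ uFn_le_tsum m T hΩ1 s))

lemma uFn_ne_zero (hΩ1 : m Ω = 1) (s : ℝ) : uFn m (⇑T) Ω s ≠ 0 :=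
  fun h => by simpa [h] using one_le_uFn m T hΩ1 s

lemma uFn_anti {s t : ℝ} (h : s ≤ t) : uFn m (⇑T) Ω t ≤ uFn m (⇑T) Ω s := by
  rw [uFn_eq, uFn_eq]
  exact Summable.tsum_le_tsum (fun n => mul_le_mul_left (eE_mono_s h n) _)
    ENNReal.summable ENNReal.summable

lemma iter_symm (n : ℕ) (x : X) : (⇑T.symm)^[n] ((⇑T)^[n] x) = x :=
  (Function.LeftInverse.iterate T.symm_apply_apply n) x

lemma lintegral_UFn (hΩ : MeasurableSet Ω) (s : ℝ) :
    ∫⁻ x in Ω, UFn (⇑T) Ω s x ∂m = uFn m (⇑T) Ω s := by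
  rw [uFn_eq]
  simp_rw [UFn_eq]
  rw [lintegral_tsum (f := fun (n : ℕ) (x : X) => eE s n * Ω.indicator 1 ((⇑T)^[n] x))
    (fun n => (measurable_const.mul ((measurable_one.indicator hΩ).comp
      (T.measurable.iterate n))).aemeasurable)]
  refine tsum_congr fun n => ?_
  rw [lintegral_const_mul (eE s n) (f := fun x => Ω.indicator 1 ((⇑T)^[n] x))
    ((measurable_one.indicator hΩ).comp (T.measurable.iterate n))]
  congr 1
  have hpre : MeasurableSet ((⇑T)^[n] ⁻¹' Ω) := (T.measurable.iterate n) hΩ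
  have : ∀ x, Ω.indicator (1 : X → ℝ≥0∞) ((⇑T)^[n] x)
      = ((⇑T)^[n] ⁻¹' Ω).indicator (1 : X → ℝ≥0∞) x := by
    intro x
    by_cases hx : (⇑T)^[n] x ∈ Ω <;> simp [Set.indicator_apply, Set.mem_preimage, hx]
  calc ∫⁻ x in Ω, Ω.indicator 1 ((⇑T)^[n] x) ∂m
      = ∫⁻ x in Ω, ((⇑T)^[n] ⁻¹' Ω).indicator 1 x ∂m := by
        exact lintegral_congr fun x => this x
    _ = m (Ω ∩ (⇑T)^[n] ⁻¹' Ω) := by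
        rw [lintegral_indicator_one hpre, Measure.restrict_apply hpre, Set.inter_comm]

lemma dual (hΩ : MeasurableSet Ω) (hMP : MeasurePreserving (⇑T) m m) (t : ℝ)
    (F : X → ℝ≥0∞) (hF : Measurable F) :
    ∫⁻ x in Ω, (∑' n : ℕ, eE t n * Ω.indicator 1 ((⇑T)^[n] x) * F ((⇑T)^[n] x)) ∂m
      = ∫⁻ y in Ω, F y * UFn (⇑T.symm) Ω t y ∂m := by
  set G : X → ℝ≥0∞ := fun y => Ω.indicator 1 y * F y with hGdef
  have hG : Measurable G := (measurable_one.indicator hΩ).mul hF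
  have key : ∀ n : ℕ, ∫⁻ x in Ω, G ((⇑T)^[n] x) ∂m
      = ∫⁻ y, Ω.indicator 1 ((⇑T.symm)^[n] y) * G y ∂m := by
    intro n
    have hH : Measurable (fun y => Ω.indicator (1 : X → ℝ≥0∞) ((⇑T.symm)^[n] y) * G y) :=
      ((measurable_one.indicator hΩ).comp (T.symm.measurable.iterate n)).mul hG
    rw [← (hMP.iterate n).lintegral_comp hH, ← lintegral_indicator hΩ]
    refine lintegral_congr fun x => ?_
    simp only [iter_symm T n x]
    by_cases hx : x ∈ Ω
    · simp [Set.indicator_of_mem hx]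
    · simp [Set.indicator_of_notMem hx, hx]
  calc ∫⁻ x in Ω, (∑' n : ℕ, eE t n * Ω.indicator 1 ((⇑T)^[n] x) * F ((⇑T)^[n] x)) ∂m
      = ∫⁻ x in Ω, (∑' n : ℕ, eE t n * G ((⇑T)^[n] x)) ∂m := by
        refine lintegral_congr fun x => tsum_congr fun n => by rw [hGdef, mul_assoc]
    _ = ∑' n : ℕ, eE t n * ∫⁻ x in Ω, G ((⇑T)^[n] x) ∂m := by
        rw [lintegral_tsum (f := fun (n : ℕ) (x : X) => eE t n * G ((⇑T)^[n] x))
          (fun n => (measurable_const.mul (hG.comp (T.measurable.iterate n))).aemeasurable)]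
        exact tsum_congr fun n =>
          lintegral_const_mul (eE t n) (f := fun x => G ((⇑T)^[n] x))
            (hG.comp (T.measurable.iterate n))
    _ = ∑' n : ℕ, eE t n * ∫⁻ y, Ω.indicator 1 ((⇑T.symm)^[n] y) * G y ∂m := by
        exact tsum_congr fun n => by rw [key n]
    _ = ∫⁻ y, (∑' n : ℕ, eE t n * (Ω.indicator 1 ((⇑T.symm)^[n] y) * G y)) ∂m := by
        rw [lintegral_tsum (f := fun (n : ℕ) (y : X) =>
            eE t n * (Ω.indicator 1 ((⇑T.symm)^[n] y) * G y))
          (fun n => (measurable_const.mul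
          (((measurable_one.indicator hΩ).comp (T.symm.measurable.iterate n)).mul
            hG)).aemeasurable)]
        exact tsum_congr fun n => (lintegral_const_mul (eE t n)
          (f := fun y => Ω.indicator 1 ((⇑T.symm)^[n] y) * G y)
          (((measurable_one.indicator hΩ).comp (T.symm.measurable.iterate n)).mul hG)).symm
    _ = ∫⁻ y, Ω.indicator 1 y * (F y * UFn (⇑T.symm) Ω t y) ∂m := by
        refine lintegral_congr fun y => ?_
        calc ∑' (n : ℕ), eE t n * (Ω.indicator 1 ((⇑T.symm)^[n] y) * G y)
            = ∑' (n : ℕ), G y * (eE t n * Ω.indicator 1 ((⇑T.symm)^[n] y)) :=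
              tsum_congr fun n => by ring
          _ = G y * ∑' (n : ℕ), eE t n * Ω.indicator 1 ((⇑T.symm)^[n] y) :=
              ENNReal.tsum_mul_left
          _ = Ω.indicator 1 y * (F y * UFn (⇑T.symm) Ω t y) := by
              simp only [hGdef, UFn_eq]; ring
    _ = ∫⁻ y in Ω, F y * UFn (⇑T.symm) Ω t y ∂m := by
        rw [← lintegral_indicator hΩ]
        refine lintegral_congr fun y => ?_
        by_cases hy : y ∈ Ω <;> simp [hy]

end basics


section
variable {X : Type*} [MeasurableSpace X] (m : MeasureTheory.Measure X) (T : X ≃ᵐ X) (Ω : Set X)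

lemma UFn_tail (S : X → X) (s : ℝ) (n : ℕ) (x : X) :
    (∑' m : ℕ, eE s (n + m) * Ω.indicator (1 : X → ℝ≥0∞) (S^[n + m] x))
      = eE s n * UFn S Ω s (S^[n] x) := by
  rw [UFn_eq, ← ENNReal.tsum_mul_left]
  refine tsum_congr fun m => ?_
  rw [eE_add, add_comm n m, Function.iterate_add_apply]
  ring

lemma cast_succ_real (p : ℕ) : ((p + 1 : ℕ) : ℝ) = (p : ℝ) + 1 := by push_cast; ring
lemma cast_succ2_real (q : ℕ) : ((q + 2 : ℕ) : ℝ) = (q : ℝ) + 2 := by push_cast; ring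

lemma pt_upper (S : X → X) {s : ℝ} (hs : 0 < s) (p : ℕ) (x : X) :
    UFn S Ω s x ^ (p+1) ≤ ((p:ℝ≥0∞)+1) *
      ∑' n, eE (((p:ℝ)+1) * s) n * Ω.indicator (1 : X → ℝ≥0∞) (S^[n] x)
        * UFn S Ω s (S^[n] x) ^ p := by
  have h := tel_upper (fun n => eE s n * Ω.indicator (1 : X → ℝ≥0∞) (S^[n] x))
    (by rw [← UFn_eq]; exact UFn_ne_top Ω hs S x) p
  refine le_trans (le_of_eq (by rw [UFn_eq])) (h.trans (le_of_eq ?_))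
  congr 1
  refine tsum_congr fun n => ?_
  rw [UFn_tail, mul_pow]
  have he : eE s n ^ (p+1) = eE (((p:ℝ)+1) * s) n := by
    rw [eE_pow, cast_succ_real]
  rw [← he]
  ring

lemma pt_lower (S : X → X) {s : ℝ} (hs : 0 < s) (q : ℕ) (x : X) :
    ((q:ℝ≥0∞)+2) * ∑' n, eE (((q:ℝ)+2) * s) n * Ω.indicator (1 : X → ℝ≥0∞) (S^[n] x)
        * UFn S Ω s (S^[n] x) ^ (q+1)
      ≤ UFn S Ω s x ^ (q+2) + ((q:ℝ≥0∞)+2) * (((q:ℝ≥0∞)+1) *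
          ∑' n, eE (((q:ℝ)+2) * s) n * Ω.indicator (1 : X → ℝ≥0∞) (S^[n] x)
            * UFn S Ω s (S^[n] x) ^ q) := by
  have h := tel_lower' (fun n => eE s n * Ω.indicator (1 : X → ℝ≥0∞) (S^[n] x)) q
  have he : ∀ k : ℕ, eE s k ^ (q+2) = eE (((q:ℝ)+2) * s) k := fun k => by
    rw [eE_pow, cast_succ2_real]
  have h1 : (∑' n, eE (((q:ℝ)+2) * s) n * Ω.indicator (1 : X → ℝ≥0∞) (S^[n] x)
        * UFn S Ω s (S^[n] x) ^ (q+1))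
      = ∑' n, (eE s n * Ω.indicator (1 : X → ℝ≥0∞) (S^[n] x))
          * (∑' m : ℕ, eE s (n + m) * Ω.indicator (1 : X → ℝ≥0∞) (S^[n + m] x)) ^ (q+1) := by
    refine tsum_congr fun n => ?_
    rw [UFn_tail, mul_pow, ← he n]
    ring
  have h2 : (∑' n, eE (((q:ℝ)+2) * s) n * Ω.indicator (1 : X → ℝ≥0∞) (S^[n] x)
        * UFn S Ω s (S^[n] x) ^ q)
      = ∑' n, (eE s n * Ω.indicator (1 : X → ℝ≥0∞) (S^[n] x)) ^ 2
          * (∑' m : ℕ, eE s (n + m) * Ω.indicator (1 : X → ℝ≥0∞) (S^[n + m] x)) ^ q := by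
    refine tsum_congr fun n => ?_
    rw [UFn_tail, mul_pow, mul_pow, ind_sq, ← he n]
    ring
  rw [h1, h2, UFn_eq Ω S s x]
  exact h

variable {Ω}

lemma int_upper (hΩ : MeasurableSet Ω) (hMP : MeasurePreserving (⇑T) m m)
    {s : ℝ} (hs : 0 < s) (p : ℕ) :
    (∫⁻ x in Ω, UFn (⇑T) Ω s x ^ (p+1) ∂m)
      ≤ ((p:ℝ≥0∞)+1) * ∫⁻ y in Ω, UFn (⇑T) Ω s y ^ p
          * UFn (⇑T.symm) Ω (((p:ℝ)+1) * s) y ∂m := by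
  have hF : Measurable fun y => UFn (⇑T) Ω s y ^ p :=
    (measurable_UFn Ω T.measurable hΩ s).pow_const p
  have hmint : Measurable fun x => ∑' n, eE (((p:ℝ)+1) * s) n
      * Ω.indicator (1 : X → ℝ≥0∞) ((⇑T)^[n] x) * UFn (⇑T) Ω s ((⇑T)^[n] x) ^ p :=
    Measurable.ennreal_tsum fun n =>
      ((measurable_const.mul ((measurable_one.indicator hΩ).comp
        (T.measurable.iterate n))).mul (hF.comp (T.measurable.iterate n)))
  calc (∫⁻ x in Ω, UFn (⇑T) Ω s x ^ (p+1) ∂m)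
      ≤ ∫⁻ x in Ω, ((p:ℝ≥0∞)+1) * ∑' n, eE (((p:ℝ)+1) * s) n
          * Ω.indicator (1 : X → ℝ≥0∞) ((⇑T)^[n] x) * UFn (⇑T) Ω s ((⇑T)^[n] x) ^ p ∂m :=
        lintegral_mono fun x => pt_upper Ω (⇑T) hs p x
    _ = ((p:ℝ≥0∞)+1) * ∫⁻ x in Ω, ∑' n, eE (((p:ℝ)+1) * s) n
          * Ω.indicator (1 : X → ℝ≥0∞) ((⇑T)^[n] x) * UFn (⇑T) Ω s ((⇑T)^[n] x) ^ p ∂m :=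
        lintegral_const_mul _ hmint
    _ = ((p:ℝ≥0∞)+1) * ∫⁻ y in Ω, UFn (⇑T) Ω s y ^ p
          * UFn (⇑T.symm) Ω (((p:ℝ)+1) * s) y ∂m := by
        rw [dual m T hΩ hMP (((p:ℝ)+1) * s) _ hF]

lemma int_lower (hΩ : MeasurableSet Ω) (hMP : MeasurePreserving (⇑T) m m)
    {s : ℝ} (hs : 0 < s) (q : ℕ) :
    ((q:ℝ≥0∞)+2) * ∫⁻ y in Ω, UFn (⇑T) Ω s y ^ (q+1)
        * UFn (⇑T.symm) Ω (((q:ℝ)+2) * s) y ∂m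
      ≤ (∫⁻ x in Ω, UFn (⇑T) Ω s x ^ (q+2) ∂m)
        + ((q:ℝ≥0∞)+2) * (((q:ℝ≥0∞)+1) * ∫⁻ y in Ω, UFn (⇑T) Ω s y ^ q
            * UFn (⇑T.symm) Ω (((q:ℝ)+2) * s) y ∂m) := by
  have hF1 : Measurable fun y => UFn (⇑T) Ω s y ^ (q+1) :=
    (measurable_UFn Ω T.measurable hΩ s).pow_const (q+1)
  have hF2 : Measurable fun y => UFn (⇑T) Ω s y ^ q :=
    (measurable_UFn Ω T.measurable hΩ s).pow_const q
  have hmint : ∀ r : ℕ, Measurable fun x => ∑' n, eE (((q:ℝ)+2) * s) n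
      * Ω.indicator (1 : X → ℝ≥0∞) ((⇑T)^[n] x) * UFn (⇑T) Ω s ((⇑T)^[n] x) ^ r :=
    fun r => Measurable.ennreal_tsum fun n =>
      ((measurable_const.mul ((measurable_one.indicator hΩ).comp
        (T.measurable.iterate n))).mul
          (((measurable_UFn Ω T.measurable hΩ s).pow_const r).comp (T.measurable.iterate n)))
  calc ((q:ℝ≥0∞)+2) * ∫⁻ y in Ω, UFn (⇑T) Ω s y ^ (q+1)
        * UFn (⇑T.symm) Ω (((q:ℝ)+2) * s) y ∂m
      = ((q:ℝ≥0∞)+2) * ∫⁻ x in Ω, ∑' n, eE (((q:ℝ)+2) * s) n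
          * Ω.indicator (1 : X → ℝ≥0∞) ((⇑T)^[n] x) * UFn (⇑T) Ω s ((⇑T)^[n] x) ^ (q+1) ∂m := by
        rw [dual m T hΩ hMP (((q:ℝ)+2) * s) _ hF1]
    _ = ∫⁻ x in Ω, ((q:ℝ≥0∞)+2) * ∑' n, eE (((q:ℝ)+2) * s) n
          * Ω.indicator (1 : X → ℝ≥0∞) ((⇑T)^[n] x) * UFn (⇑T) Ω s ((⇑T)^[n] x) ^ (q+1) ∂m :=
        (lintegral_const_mul _ (hmint (q+1))).symm
    _ ≤ ∫⁻ x in Ω, (UFn (⇑T) Ω s x ^ (q+2) + ((q:ℝ≥0∞)+2) * (((q:ℝ≥0∞)+1) *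
          ∑' n, eE (((q:ℝ)+2) * s) n * Ω.indicator (1 : X → ℝ≥0∞) ((⇑T)^[n] x)
            * UFn (⇑T) Ω s ((⇑T)^[n] x) ^ q)) ∂m :=
        lintegral_mono fun x => pt_lower Ω (⇑T) hs q x
    _ = (∫⁻ x in Ω, UFn (⇑T) Ω s x ^ (q+2) ∂m)
        + ((q:ℝ≥0∞)+2) * (((q:ℝ≥0∞)+1) * ∫⁻ x in Ω, ∑' n, eE (((q:ℝ)+2) * s) n
            * Ω.indicator (1 : X → ℝ≥0∞) ((⇑T)^[n] x) * UFn (⇑T) Ω s ((⇑T)^[n] x) ^ q ∂m) := by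
        rw [lintegral_add_left ((measurable_UFn Ω T.measurable hΩ s).pow_const (q+2)),
          lintegral_const_mul _ ((hmint q).const_mul _), lintegral_const_mul _ (hmint q)]
    _ = (∫⁻ x in Ω, UFn (⇑T) Ω s x ^ (q+2) ∂m)
        + ((q:ℝ≥0∞)+2) * (((q:ℝ≥0∞)+1) * ∫⁻ y in Ω, UFn (⇑T) Ω s y ^ q
            * UFn (⇑T.symm) Ω (((q:ℝ)+2) * s) y ∂m) := by
        rw [dual m T hΩ hMP (((q:ℝ)+2) * s) _ hF2]
end



/-- scaling map preserves `𝓝[>] 0`. -/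
lemma tendsto_scale {w : ℝ} (hw : 0 < w) :
    Tendsto (fun s : ℝ => w * s) (𝓝[>] (0:ℝ)) (𝓝[>] (0:ℝ)) := by
  rw [tendsto_nhdsWithin_iff]
  constructor
  · have h0 : Tendsto (fun s : ℝ => w * s) (𝓝 0) (𝓝 (w * 0)) :=
      (continuous_const.mul continuous_id).tendsto 0
    rw [mul_zero] at h0
    exact h0.mono_left nhdsWithin_le_nhds
  · filter_upwards [self_mem_nhdsWithin] with s hs
    exact mul_pos hw hs

lemma exists_sq {C : ℝ≥0∞} (hC : 1 < C) : ∃ D : ℝ≥0∞, 1 < D ∧ D * D ≤ C := by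
  rcases eq_or_ne C ⊤ with rfl | hC'
  · exact ⟨2, by norm_num, le_top⟩
  · lift C to ℝ≥0 using hC'
    have h1 : (1:ℝ≥0) < C := by exact_mod_cast hC
    refine ⟨(NNReal.sqrt C : ℝ≥0∞), ?_, ?_⟩
    · rw [show (1:ℝ≥0∞) = ((1:ℝ≥0):ℝ≥0∞) by simp]
      rw [ENNReal.coe_lt_coe, show (1:ℝ≥0) = NNReal.sqrt 1 by simp]
      exact NNReal.sqrt.lt_iff_lt.2 h1
    · rw [← ENNReal.coe_mul, NNReal.mul_self_sqrt]

/-- pointwise truncation bound. -/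
lemma trunc_pt (f lam : ℝ≥0∞) (hl0 : lam ≠ 0) (hlt : lam ≠ ⊤) (k : ℕ) :
    f ^ k ≤ lam ^ k + lam⁻¹ * f ^ (k+1) := by
  by_cases hf : f ≤ lam
  · exact le_trans (pow_le_pow_left' hf k) (le_add_right le_rfl)
  · push_neg at hf
    refine le_trans ?_ (le_add_left le_rfl)
    calc f ^ k = lam⁻¹ * lam * f ^ k := by rw [ENNReal.inv_mul_cancel hl0 hlt, one_mul]
      _ = lam⁻¹ * (lam * f ^ k) := by ring
      _ ≤ lam⁻¹ * (f * f ^ k) := mul_le_mul_right (mul_le_mul_left hf.le _) _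
      _ = lam⁻¹ * f ^ (k+1) := by rw [← pow_succ']

/-- integrated truncation bound. -/
lemma trunc_int {X : Type*} [MeasurableSpace X] (m : Measure X) (f : X → ℝ≥0∞)
    {A Ω : Set X} (hsub : A ⊆ Ω) (lam : ℝ≥0∞) (hl0 : lam ≠ 0) (hlt : lam ≠ ⊤) (k : ℕ) :
    ∫⁻ x in A, f x ^ k ∂m ≤ lam ^ k * m A + lam⁻¹ * ∫⁻ x in Ω, f x ^ (k+1) ∂m := by
  calc ∫⁻ x in A, f x ^ k ∂m
      ≤ ∫⁻ x in A, (lam ^ k + lam⁻¹ * f x ^ (k+1)) ∂m :=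
        lintegral_mono fun x => trunc_pt (f x) lam hl0 hlt k
    _ = lam ^ k * m A + lam⁻¹ * ∫⁻ x in A, f x ^ (k+1) ∂m := by
        rw [lintegral_add_left measurable_const, setLIntegral_const,
          lintegral_const_mul' _ _ (ENNReal.inv_ne_top.2 hl0)]
    _ ≤ lam ^ k * m A + lam⁻¹ * ∫⁻ x in Ω, f x ^ (k+1) ∂m := by
        refine add_le_add_right (mul_le_mul_right (lintegral_mono_set hsub) _) _

section utop
variable {X : Type*} [MeasurableSpace X] (m : Measure X) (T : X ≃ᵐ X) {Ω : Set X}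

lemma sum_b_top (hC : Conservative (⇑T) m) (hΩ : MeasurableSet Ω) (hΩ1 : m Ω = 1) :
    uFn m (⇑T) Ω 0 = ⊤ := by
  rw [← lintegral_UFn m T hΩ 0]
  have hae : ∀ᵐ x ∂(m.restrict Ω), UFn (⇑T) Ω 0 x = ⊤ := by
    rw [ae_restrict_iff' hΩ]
    filter_upwards [hC.ae_mem_imp_frequently_image_mem hΩ.nullMeasurableSet] with x hx hxΩ
    have hinf : {k : ℕ | (⇑T)^[k] x ∈ Ω}.Infinite :=
      Nat.frequently_atTop_iff_infinite.1 (hx hxΩ)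
    have h1 : ∀ n : ℕ, eE 0 n * Ω.indicator (1 : X → ℝ≥0∞) ((⇑T)^[n] x)
        = Set.indicator {k : ℕ | (⇑T)^[k] x ∈ Ω} (fun _ => (1:ℝ≥0∞)) n := by
      intro n
      by_cases h : (⇑T)^[n] x ∈ Ω <;> simp [eE_zero_s, Set.indicator_apply, h]
    rw [UFn_eq, tsum_congr h1, ← tsum_subtype]
    have : Infinite ↥{k : ℕ | (⇑T)^[k] x ∈ Ω} := hinf.to_subtype
    exact tsum_const_eq_top_of_ne_zero one_ne_zero
  calc ∫⁻ x in Ω, UFn (⇑T) Ω 0 x ∂m = ∫⁻ _ in Ω, ⊤ ∂m := lintegral_congr_ae hae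
    _ = ⊤ := by rw [setLIntegral_const, hΩ1, mul_one]

lemma uFn_tendsto_top (hC : Conservative (⇑T) m) (hΩ : MeasurableSet Ω) (hΩ1 : m Ω = 1) :
    Tendsto (fun s => uFn m (⇑T) Ω s) (𝓝[>] (0:ℝ)) (𝓝 ⊤) := by
  refine tendsto_order.2 ⟨fun M hM => ?_, fun M hM => absurd hM (not_top_lt)⟩
  -- partial sums of `b` tend to `uFn 0 = ⊤`
  have hpartial : Tendsto (fun N => ∑ n ∈ Finset.range N,
      m (Ω ∩ (⇑T)^[n] ⁻¹' Ω)) atTop (𝓝 ⊤) := by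
    have h := ENNReal.tendsto_nat_tsum (fun n => m (Ω ∩ (⇑T)^[n] ⁻¹' Ω))
    have htop : (∑' n, m (Ω ∩ (⇑T)^[n] ⁻¹' Ω)) = ⊤ := by
      have := sum_b_top m T hC hΩ hΩ1
      rw [uFn_eq] at this
      calc (∑' n, m (Ω ∩ (⇑T)^[n] ⁻¹' Ω))
          = ∑' n, eE 0 n * m (Ω ∩ (⇑T)^[n] ⁻¹' Ω) := by
            refine tsum_congr fun n => ?_
            rw [eE_zero_s, one_mul]
        _ = ⊤ := this
    rw [htop] at h
    exact h
  obtain ⟨N, hN⟩ : ∃ N, M < ∑ n ∈ Finset.range N, m (Ω ∩ (⇑T)^[n] ⁻¹' Ω) :=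
    ((tendsto_order.1 hpartial).1 M hM).exists
  set P := ∑ n ∈ Finset.range N, m (Ω ∩ (⇑T)^[n] ⁻¹' Ω) with hP
  have hPfin : P ≠ ⊤ := by
    have hle : P ≤ (N : ℝ≥0∞) := by
      calc P ≤ ∑ _n ∈ Finset.range N, (1:ℝ≥0∞) := Finset.sum_le_sum fun n _ => by
            rw [← hΩ1]; exact measure_mono Set.inter_subset_left
        _ = N := by simp
    intro h
    rw [h, top_le_iff] at hle
    exact (ENNReal.natCast_ne_top N) hle
  have heE : Tendsto (fun s : ℝ => eE s N) (𝓝[>] (0:ℝ)) (𝓝 1) := by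
    have hcont : Continuous fun s : ℝ => eE s N := by
      unfold eE
      exact ENNReal.continuous_ofReal.comp (Real.continuous_exp.comp (by continuity))
    have h0 := (hcont.tendsto 0).mono_left (nhdsWithin_le_nhds (s := Set.Ioi (0:ℝ)))
    rwa [eE_zero_s] at h0
  have hmul : Tendsto (fun s : ℝ => eE s N * P) (𝓝[>] (0:ℝ)) (𝓝 P) := by
    have := ENNReal.Tendsto.mul_const heE (Or.inr hPfin)
    rwa [one_mul] at this
  filter_upwards [(tendsto_order.1 hmul).1 M hN, self_mem_nhdsWithin] with s h1 hs
  refine h1.trans_le ?_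
  rw [uFn_eq]
  calc eE s N * P = ∑ n ∈ Finset.range N, eE s N * m (Ω ∩ (⇑T)^[n] ⁻¹' Ω) := by
        rw [hP, Finset.mul_sum]
    _ ≤ ∑ n ∈ Finset.range N, eE s n * m (Ω ∩ (⇑T)^[n] ⁻¹' Ω) :=
        Finset.sum_le_sum fun n hn => mul_le_mul_left
          (eE_mono_n (le_of_lt hs) (Finset.mem_range.1 hn).le) _
    _ ≤ ∑' n, eE s n * m (Ω ∩ (⇑T)^[n] ⁻¹' Ω) := ENNReal.sum_le_tsum _

end utop





noncomputable def Tg {X : Type*} [MeasurableSpace X] (m : Measure X) (T : X ≃ᵐ X) (Ω : Set X)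
    (p : ℕ) (s : ℝ) : ℝ≥0∞ :=
  (p.factorial : ℝ≥0∞) * ∏ k ∈ Finset.Icc 1 p, uFn m (⇑T) Ω (k * s)

noncomputable def Mi {X : Type*} [MeasurableSpace X] (m : Measure X) (T : X ≃ᵐ X) (Ω : Set X)
    (p : ℕ) (s : ℝ) : ℝ≥0∞ :=
  ∫⁻ x in Ω, UFn (⇑T) Ω s x ^ p ∂m

section tgmi
variable {X : Type*} [MeasurableSpace X] (m : Measure X) (T : X ≃ᵐ X) {Ω : Set X}


lemma Tg_zero (s : ℝ) : Tg m T Ω 0 s = 1 := by simp [Tg]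

lemma Tg_succ (p : ℕ) (s : ℝ) :
    Tg m T Ω (p+1) s = ((p:ℝ≥0∞)+1) * uFn m (⇑T) Ω (((p:ℝ)+1) * s) * Tg m T Ω p s := by
  rw [Tg, Tg, Finset.prod_Icc_succ_top (Nat.le_add_left 1 p), Nat.factorial_succ]
  have h1 : ((p:ℝ) + 1) = ((p+1 : ℕ) : ℝ) := by push_cast; ring
  have h2 : (((p+1) * p.factorial : ℕ) : ℝ≥0∞) = ((p:ℝ≥0∞)+1) * (p.factorial : ℝ≥0∞) := by
    push_cast; ring
  rw [h1, h2]
  ring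

lemma one_le_Tg (hΩ1 : m Ω = 1) (p : ℕ) (s : ℝ) : 1 ≤ Tg m T Ω p s := by
  rw [Tg, show (1:ℝ≥0∞) = 1 * 1 by rw [mul_one]]
  exact mul_le_mul' (by exact_mod_cast Nat.one_le_iff_ne_zero.2 p.factorial_ne_zero)
    (Finset.one_le_prod' fun k _ => one_le_uFn m T hΩ1 _)

lemma Tg_ne_zero (hΩ1 : m Ω = 1) (p : ℕ) (s : ℝ) : Tg m T Ω p s ≠ 0 := by
  intro h
  simpa [h] using one_le_Tg m T hΩ1 p s

lemma Tg_ne_top (hΩ1 : m Ω = 1) (p : ℕ) {s : ℝ} (hs : 0 < s) : Tg m T Ω p s ≠ ⊤ := by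
  rw [Tg]
  refine mul_ne_top (ENNReal.natCast_ne_top _) (ENNReal.prod_lt_top fun k hk => ?_).ne
  have hk1 : 1 ≤ k := (Finset.mem_Icc.1 hk).1
  have : (0:ℝ) < k * s := mul_pos (by exact_mod_cast hk1) hs
  exact (uFn_ne_top m T hΩ1 this).lt_top

lemma pow_le_Tg (hΩ1 : m Ω = 1) (p : ℕ) {s w : ℝ} (hs : 0 < s) (hw : (p:ℝ) ≤ w) :
    uFn m (⇑T) Ω (w * s) ^ p ≤ Tg m T Ω p s := by
  rw [Tg]
  refine le_trans ?_ (le_mul_of_one_le_left (zero_le)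
    (by exact_mod_cast Nat.one_le_iff_ne_zero.2 p.factorial_ne_zero))
  have hcard : (Finset.Icc 1 p).card = p := by rw [Nat.card_Icc]; omega
  calc uFn m (⇑T) Ω (w * s) ^ p = ∏ _k ∈ Finset.Icc 1 p, uFn m (⇑T) Ω (w * s) := by
        rw [Finset.prod_const, hcard]
    _ ≤ ∏ k ∈ Finset.Icc 1 p, uFn m (⇑T) Ω (k * s) := by
        refine Finset.prod_le_prod' fun k hk => uFn_anti m T ?_
        have hk2 : (k:ℝ) ≤ p := by exact_mod_cast (Finset.mem_Icc.1 hk).2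
        nlinarith

lemma Mi_zero (hΩ1 : m Ω = 1) (s : ℝ) : Mi m T Ω 0 s = 1 := by
  simp [Mi, hΩ1]

lemma Mi_one (hΩ : MeasurableSet Ω) (s : ℝ) : Mi m T Ω 1 s = uFn m (⇑T) Ω s := by
  rw [Mi, ← lintegral_UFn m T hΩ s]
  exact lintegral_congr fun x => pow_one _

lemma Mi_ne_top (hΩ1 : m Ω = 1) (p : ℕ) {s : ℝ} (hs : 0 < s) : Mi m T Ω p s ≠ ⊤ := by
  have h : Mi m T Ω p s ≤ (∑' n, eE s n) ^ p * 1 := by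
    rw [← hΩ1, Mi, ← setLIntegral_const Ω ((∑' n, eE s n) ^ p)]
    exact lintegral_mono fun x => pow_le_pow_left' (UFn_le_tsum Ω (⇑T) x) p
  exact fun ht => (mul_ne_top (pow_ne_top (tsum_eE_ne_top hs)) one_ne_top) (top_le_iff.1 (ht ▸ h))

end tgmi



section ax
variable {X : Type*} [MeasurableSpace X]


/-- The key induction step for the lower bound, at a fixed scale `s`. -/
lemma key_step (m : Measure X) (T : X ≃ᵐ X) {Ω : Set X} (hΩ : MeasurableSet Ω)
    (hΩ1 : m Ω = 1) (hMP : MeasurePreserving (⇑T) m m) (q : ℕ) {s : ℝ} (hs : 0 < s)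
    (d : ℝ≥0∞) (hd0 : d ≠ 0) (hdt : d ≠ ⊤)
    (hae : ∀ᵐ x ∂(m.restrict Ω), UFn (⇑T.symm) Ω (((q:ℝ)+2)*s) x
      ≤ 2 * uFn m (⇑T) Ω (((q:ℝ)+2)*s))
    (hM1 : (1-d) * Tg m T Ω (q+1) s ≤ Mi m T Ω (q+1) s)
    (hMq : Mi m T Ω q s ≤ 2 * Tg m T Ω q s)
    (hM2 : Mi m T Ω (q+2) s ≤ 2 * Tg m T Ω (q+2) s)
    (hBadm : m (Ω ∩ {x | d ≤ (UFn (⇑T.symm) Ω (((q:ℝ)+2)*s) x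
        / uFn m (⇑T) Ω (((q:ℝ)+2)*s) - 1)
      + (1 - UFn (⇑T.symm) Ω (((q:ℝ)+2)*s) x / uFn m (⇑T) Ω (((q:ℝ)+2)*s))})
      ≤ (d/2) * (d * (4*((q:ℝ≥0∞)+2))⁻¹)^(q+1))
    (huL : 4 / d ≤ uFn m (⇑T) Ω (((q:ℝ)+1)*s)) :
    (1-d)*(1-d) * Tg m T Ω (q+2) s
      ≤ Mi m T Ω (q+2) s + (d * Tg m T Ω (q+2) s + d * Tg m T Ω (q+2) s) := by
  have hws : (0:ℝ) < ((q:ℝ)+2)*s := by positivity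
  set uw : ℝ≥0∞ := uFn m (⇑T) Ω (((q:ℝ)+2) * s) with huwdef
  have huw0 : uw ≠ 0 := uFn_ne_zero m T hΩ1 _
  have huwt : uw ≠ ⊤ := uFn_ne_top m T hΩ1 hws
  set W : ℝ≥0∞ := (q:ℝ≥0∞) + 2 with hWdef
  have hW0 : W ≠ 0 := by
    have h2 : (2:ℝ≥0∞) ≤ W := le_add_self
    intro h; rw [h] at h2; exact absurd h2 (by norm_num)
  have hWt : W ≠ ⊤ := by
    rw [hWdef]; exact ENNReal.add_ne_top.2 ⟨ENNReal.natCast_ne_top q, by norm_num⟩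
  set B : ℝ≥0∞ := d * (4 * W)⁻¹ with hBdef
  have h4W0 : (4:ℝ≥0∞) * W ≠ 0 := mul_ne_zero (by norm_num) hW0
  have h4Wt : (4:ℝ≥0∞) * W ≠ ⊤ := mul_ne_top (by norm_num) hWt
  have hB0 : B ≠ 0 := mul_ne_zero hd0 (ENNReal.inv_ne_zero.2 h4Wt)
  have hBt : B ≠ ⊤ := mul_ne_top hdt (ENNReal.inv_ne_top.2 h4W0)
  set U : X → ℝ≥0∞ := UFn (⇑T) Ω s with hUdef
  have hU : Measurable U := measurable_UFn Ω T.measurable hΩ s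
  set Um : X → ℝ≥0∞ := UFn (⇑T.symm) Ω (((q:ℝ)+2) * s) with hUmdef
  have hUm : Measurable Um := measurable_UFn Ω T.symm.measurable hΩ _
  set Tq1 : ℝ≥0∞ := Tg m T Ω (q+1) s with hTq1def
  have hTg2 : Tg m T Ω (q+2) s = W * uw * Tq1 := by
    rw [show q+2 = (q+1)+1 by omega, Tg_succ m T (q+1) s, hTq1def, hWdef, huwdef]
    have h1 : (((q+1:ℕ)):ℝ) + 1 = (q:ℝ) + 2 := by push_cast; ring
    have h2 : (((q+1:ℕ)):ℝ≥0∞) + 1 = (q:ℝ≥0∞) + 2 := by push_cast; ring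
    rw [h1, h2]
  -- the bad set
  set Bad : Set X := Ω ∩ {x | d ≤ (Um x / uw - 1) + (1 - Um x / uw)} with hBaddef
  have hBadMeas : MeasurableSet Bad := by
    refine hΩ.inter (measurableSet_le measurable_const ?_)
    exact ((hUm.div measurable_const).sub measurable_const).add
      (measurable_const.sub (hUm.div measurable_const))
  have hBadsub : Bad ⊆ Ω := Set.inter_subset_left
  -- pointwise bound off the bad set
  have hGood : ∀ x ∈ Ω \ Bad, (1 - d) * uw ≤ Um x := by
    intro x hx
    have hx2 : ¬ d ≤ (Um x / uw - 1) + (1 - Um x / uw) := fun h => hx.2 ⟨hx.1, h⟩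
    push_neg at hx2
    have h3 : 1 - Um x / uw < d := lt_of_le_of_lt (le_add_self) hx2
    have h4 : (1:ℝ≥0∞) - d ≤ Um x / uw := by
      rcases le_or_gt 1 (Um x / uw) with hR | hR
      · exact le_trans tsub_le_self hR
      · have h5 : (1:ℝ≥0∞) ≤ d + Um x / uw := by
          calc (1:ℝ≥0∞) = (1 - Um x / uw) + Um x / uw := (tsub_add_cancel_of_le hR.le).symm
            _ ≤ d + Um x / uw := add_le_add_left h3.le _
        rw [add_comm] at h5
        exact tsub_le_iff_right.2 h5
    exact (ENNReal.le_div_iff_mul_le (Or.inl huw0) (Or.inl huwt)).1 h4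
  -- bad-set integral bound
  have hBadI : ∫⁻ x in Bad, U x ^ (q+1) ∂m ≤ d * Tq1 := by
    set lam : ℝ≥0∞ := B⁻¹ * uw with hlamdef
    have hlam0 : lam ≠ 0 := mul_ne_zero (ENNReal.inv_ne_zero.2 hBt) huw0
    have hlamt : lam ≠ ⊤ := mul_ne_top (ENNReal.inv_ne_top.2 hB0) huwt
    have htr := trunc_int m U hBadsub lam hlam0 hlamt (q+1)
    have h1 : lam ^ (q+1) * m Bad ≤ (d/2) * Tq1 := by
      have hle1 : lam ^ (q+1) * m Bad ≤ (B^(q+1))⁻¹ * uw^(q+1) * ((d/2) * B^(q+1)) := by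
        rw [hlamdef, mul_pow, ENNReal.inv_pow]
        exact mul_le_mul_right (le_trans hBadm (le_of_eq rfl)) _
      refine hle1.trans ?_
      calc (B^(q+1))⁻¹ * uw^(q+1) * ((d/2) * B^(q+1))
          = (d/2) * ((B^(q+1))⁻¹ * B^(q+1)) * uw^(q+1) := by ring
        _ = (d/2) * uw^(q+1) := by
            rw [ENNReal.inv_mul_cancel (pow_ne_zero _ hB0) (pow_ne_top hBt), mul_one]
        _ ≤ (d/2) * Tq1 := by
            refine mul_le_mul_right ?_ _
            rw [hTq1def, huwdef]
            exact pow_le_Tg m T hΩ1 (q+1) hs (by push_cast; linarith)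
    have h2 : lam⁻¹ * Mi m T Ω (q+2) s ≤ (d/2) * Tq1 := by
      have hli : lam⁻¹ = B * uw⁻¹ := by
        rw [hlamdef, ENNReal.mul_inv (Or.inl (ENNReal.inv_ne_zero.2 hBt))
          (Or.inl (ENNReal.inv_ne_top.2 hB0)), inv_inv]
      calc lam⁻¹ * Mi m T Ω (q+2) s ≤ (B * uw⁻¹) * (2 * Tg m T Ω (q+2) s) := by
            rw [hli]; exact mul_le_mul_right hM2 _
        _ = (B * uw⁻¹) * (2 * (W * uw * Tq1)) := by rw [hTg2]
        _ = (2 * B * W) * (uw⁻¹ * uw) * Tq1 := by ring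
        _ = (2 * B * W) * Tq1 := by rw [ENNReal.inv_mul_cancel huw0 huwt, mul_one]
        _ = (d/2) * Tq1 := by
            congr 1
            rw [hBdef, ENNReal.mul_inv (Or.inr hWt) (Or.inr hW0)]
            calc 2 * (d * ((4:ℝ≥0∞)⁻¹ * W⁻¹)) * W
                = d * (2 * (4:ℝ≥0∞)⁻¹) * (W⁻¹ * W) := by ring
              _ = d * (2 * (4:ℝ≥0∞)⁻¹) := by
                  rw [ENNReal.inv_mul_cancel hW0 hWt, mul_one]
              _ = d / 2 := by
                  have h24 : (2:ℝ≥0∞) * 4⁻¹ = 2⁻¹ := by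
                    rw [show ((4:ℝ≥0∞)) = 2 * 2 by norm_num,
                      ENNReal.mul_inv (by norm_num) (by norm_num), ← mul_assoc,
                      ENNReal.mul_inv_cancel (by norm_num) (by norm_num), one_mul]
                  rw [h24, div_eq_mul_inv]
    calc ∫⁻ x in Bad, U x ^ (q+1) ∂m
        ≤ lam^(q+1) * m Bad + lam⁻¹ * ∫⁻ x in Ω, U x ^ (q+1+1) ∂m := htr
      _ = lam^(q+1) * m Bad + lam⁻¹ * Mi m T Ω (q+2) s := rfl
      _ ≤ (d/2) * Tq1 + (d/2) * Tq1 := add_le_add h1 h2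
      _ = d * Tq1 := by rw [← add_mul, ENNReal.add_halves]
  -- splitting
  have hsplit : (∫⁻ x in Ω \ Bad, U x ^ (q+1) ∂m) + (∫⁻ x in Bad, U x ^ (q+1) ∂m)
      = Mi m T Ω (q+1) s := by
    rw [Mi, ← lintegral_union hBadMeas disjoint_sdiff_left,
      Set.diff_union_of_subset hBadsub]
  have hG : (1 - d) * Tq1 ≤ (∫⁻ x in Ω \ Bad, U x ^ (q+1) ∂m) + d * Tq1 := by
    calc (1 - d) * Tq1 ≤ Mi m T Ω (q+1) s := hM1
      _ = _ := hsplit.symm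
      _ ≤ (∫⁻ x in Ω \ Bad, U x ^ (q+1) ∂m) + d * Tq1 := add_le_add_right hBadI _
  -- lower bound on dual integral
  have hMieq : Mi m T Ω (q+2) s = ∫⁻ x in Ω, U x ^ (q+2) ∂m := by
    rw [hUdef]; rfl
  have hlow : W * ((1-d) * uw * ∫⁻ x in Ω \ Bad, U x ^ (q+1) ∂m)
      ≤ Mi m T Ω (q+2) s + W * (((q:ℝ≥0∞)+1) * ∫⁻ y in Ω, U y ^ q * Um y ∂m) := by
    have hIL := int_lower m T hΩ hMP hs q
    rw [← hWdef, ← hUdef, ← hUmdef, ← hMieq] at hIL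
    refine le_trans ?_ hIL
    refine mul_le_mul_right ?_ _
    calc (1-d) * uw * ∫⁻ x in Ω \ Bad, U x ^ (q+1) ∂m
        = ∫⁻ x in Ω \ Bad, (1-d) * uw * U x ^ (q+1) ∂m :=
          (lintegral_const_mul _ (hU.pow_const (q+1))).symm
      _ ≤ ∫⁻ x in Ω \ Bad, U x ^ (q+1) * Um x ∂m := by
          refine lintegral_mono_ae ?_
          rw [ae_restrict_iff' (hΩ.diff hBadMeas)]
          refine ae_of_all _ fun x hx => ?_
          calc (1-d) * uw * U x ^ (q+1) = U x ^ (q+1) * ((1-d) * uw) := by ring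
            _ ≤ U x ^ (q+1) * Um x := mul_le_mul_right (hGood x hx) _
      _ ≤ ∫⁻ x in Ω, U x ^ (q+1) * Um x ∂m := lintegral_mono_set diff_subset
  -- error bound
  have hErr : W * (((q:ℝ≥0∞)+1) * ∫⁻ y in Ω, U y ^ q * Um y ∂m)
      ≤ d * (W * uw * Tq1) := by
    have hIq : ∫⁻ y in Ω, U y ^ q * Um y ∂m ≤ 2 * uw * Mi m T Ω q s := by
      calc ∫⁻ y in Ω, U y ^ q * Um y ∂m ≤ ∫⁻ y in Ω, (2 * uw) * U y ^ q ∂m := by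
            refine lintegral_mono_ae ?_
            filter_upwards [hae] with x hx
            calc U x ^ q * Um x ≤ U x ^ q * (2 * uw) := mul_le_mul_right hx _
              _ = (2 * uw) * U x ^ q := mul_comm _ _
        _ = 2 * uw * Mi m T Ω q s := lintegral_const_mul _ (hU.pow_const q)
    have hu4 : (4:ℝ≥0∞) ≤ d * uFn m (⇑T) Ω (((q:ℝ)+1) * s) := by
      calc (4:ℝ≥0∞) = d * (4 / d) := (ENNReal.mul_div_cancel' (fun h => absurd h hd0) (fun h => absurd h hdt)).symm
        _ ≤ d * uFn m (⇑T) Ω (((q:ℝ)+1) * s) := mul_le_mul_right huL _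
    have hTq1' : Tq1 = ((q:ℝ≥0∞)+1) * uFn m (⇑T) Ω (((q:ℝ)+1)*s) * Tg m T Ω q s := by
      rw [hTq1def, Tg_succ]
    calc W * (((q:ℝ≥0∞)+1) * ∫⁻ y in Ω, U y ^ q * Um y ∂m)
        ≤ W * (((q:ℝ≥0∞)+1) * (2 * uw * (2 * Tg m T Ω q s))) := by
          refine mul_le_mul_right (mul_le_mul_right (hIq.trans ?_) _) _
          exact mul_le_mul_right hMq _
      _ = 4 * (W * uw * (((q:ℝ≥0∞)+1) * Tg m T Ω q s)) := by ring
      _ ≤ (d * uFn m (⇑T) Ω (((q:ℝ)+1)*s)) * (W * uw * (((q:ℝ≥0∞)+1) * Tg m T Ω q s)) :=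
          mul_le_mul_left hu4 _
      _ = d * (W * uw * (((q:ℝ≥0∞)+1) * uFn m (⇑T) Ω (((q:ℝ)+1)*s) * Tg m T Ω q s)) := by
          ring
      _ = d * (W * uw * Tq1) := by rw [← hTq1']
  -- assemble
  calc (1-d)*(1-d) * Tg m T Ω (q+2) s
      = W * ((1-d) * uw * ((1-d) * Tq1)) := by rw [hTg2]; ring
    _ ≤ W * ((1-d) * uw * ((∫⁻ x in Ω \ Bad, U x ^ (q+1) ∂m) + d * Tq1)) :=
        mul_le_mul_right (mul_le_mul_right hG _) _
    _ = W * ((1-d) * uw * ∫⁻ x in Ω \ Bad, U x ^ (q+1) ∂m)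
        + W * ((1-d) * uw * (d * Tq1)) := by ring
    _ ≤ (Mi m T Ω (q+2) s + W * (((q:ℝ≥0∞)+1) * ∫⁻ y in Ω, U y ^ q * Um y ∂m))
        + W * ((1-d) * uw * (d * Tq1)) := add_le_add_left hlow _
    _ ≤ (Mi m T Ω (q+2) s + d * (W * uw * Tq1)) + d * (W * uw * Tq1) := by
        refine add_le_add (add_le_add_right hErr _) ?_
        calc W * ((1-d)*uw*(d*Tq1)) = (1-d) * (d * (W * uw * Tq1)) := by ring
          _ ≤ 1 * (d * (W*uw*Tq1)) := mul_le_mul_left tsub_le_self _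
          _ = d * (W*uw*Tq1) := one_mul _
    _ = Mi m T Ω (q+2) s + (d * Tg m T Ω (q+2) s + d * Tg m T Ω (q+2) s) := by
        rw [hTg2]; ring

end ax

/-- (☙): under the dual ergodicity assumptions on `U_s⁻ := Σ e^{-sn} 1_Ω ∘ T^{-n}`,
one has `∫_Ω U_s^p dm ~ p! · Π_{k=1}^{p} u(ks)` as `s → 0+`, for every `p`. -/
theorem laplace_moment_asymptotics
    {X : Type*} [MeasurableSpace X] (m : Measure X) [SigmaFinite m]
    (T : X ≃ᵐ X) (hE : Ergodic (⇑T) m) (hC : Conservative (⇑T) m)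
    (hinf : m Set.univ = ∞)
    (Ω : Set X) (hΩ : MeasurableSet Ω) (hΩ1 : m Ω = 1)
    -- `U_s⁻ / u(s) → 1` in measure on `Ω` as `s → 0+`:
    (hmeas : ∀ ε : ℝ≥0∞, 0 < ε →
      Tendsto (fun s : ℝ => m (Ω ∩ {x | ε ≤
          (UFn (⇑T.symm) Ω s x / uFn m (⇑T) Ω s - 1) +
          (1 - UFn (⇑T.symm) Ω s x / uFn m (⇑T) Ω s)}))
        (𝓝[>] 0) (𝓝 0))
    -- `‖U_s⁻/u(s)‖_{L^∞(Ω)} → 1` as `s → 0+`: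
    (hsup : Tendsto
      (fun s : ℝ => essSup (fun x => UFn (⇑T.symm) Ω s x / uFn m (⇑T) Ω s) (m.restrict Ω))
      (𝓝[>] 0) (𝓝 1)) :
    ∀ p : ℕ,
      Tendsto (fun s : ℝ =>
          (∫⁻ x in Ω, (UFn (⇑T) Ω s x) ^ p ∂m) /
            ((p.factorial : ℝ≥0∞) * ∏ k ∈ Finset.Icc 1 p, uFn m (⇑T) Ω (k * s)))
        (𝓝[>] 0) (𝓝 1) := by
  have hMP : MeasurePreserving (⇑T) m m := hE.toMeasurePreserving
  -- eventual essential-sup bound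
  have hEss : ∀ w : ℝ, 0 < w → ∀ D : ℝ≥0∞, 1 < D →
      ∀ᶠ s in 𝓝[>] (0:ℝ), 0 < s →
        ∀ᵐ x ∂(m.restrict Ω), UFn (⇑T.symm) Ω (w*s) x ≤ D * uFn m (⇑T) Ω (w*s) := by
    intro w hw D hD
    filter_upwards [(hsup.comp (tendsto_scale hw)).eventually_lt_const hD] with s hK hs
    have hws : 0 < w * s := mul_pos hw hs
    filter_upwards [ENNReal.ae_le_essSup
      (fun x => UFn (⇑T.symm) Ω (w*s) x / uFn m (⇑T) Ω (w*s))] with x hx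
    exact (ENNReal.div_le_iff_le_mul (Or.inl (uFn_ne_zero m T hΩ1 _))
      (Or.inl (uFn_ne_top m T hΩ1 hws))).1 (hx.trans (le_of_lt hK))
  -- upper bound statement
  have hA : ∀ p : ℕ, ∀ C : ℝ≥0∞, 1 < C →
      ∀ᶠ s in 𝓝[>] (0:ℝ), Mi m T Ω p s ≤ C * Tg m T Ω p s := by
    intro p
    induction p with
    | zero =>
      intro C hC
      filter_upwards [self_mem_nhdsWithin] with s _
      rw [Mi_zero m T hΩ1, Tg_zero, mul_one]
      exact hC.le
    | succ p ih =>
      intro C hC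
      obtain ⟨D, hD1, hDC⟩ := exists_sq hC
      have hw : (0:ℝ) < (p:ℝ)+1 := by positivity
      filter_upwards [ih D hD1, hEss ((p:ℝ)+1) hw D hD1, self_mem_nhdsWithin]
        with s hMp hEs hs
      have hs : (0:ℝ) < s := hs
      have hae := hEs hs
      have hUp : Measurable fun y => UFn (⇑T) Ω s y ^ p :=
        (measurable_UFn Ω T.measurable hΩ s).pow_const p
      calc Mi m T Ω (p+1) s
          ≤ ((p:ℝ≥0∞)+1) * ∫⁻ y in Ω, UFn (⇑T) Ω s y ^ p
              * UFn (⇑T.symm) Ω (((p:ℝ)+1) * s) y ∂m := int_upper m T hΩ hMP hs p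
        _ ≤ ((p:ℝ≥0∞)+1) * ∫⁻ y in Ω,
              (D * uFn m (⇑T) Ω (((p:ℝ)+1) * s)) * UFn (⇑T) Ω s y ^ p ∂m := by
            refine mul_le_mul_right (lintegral_mono_ae ?_) _
            filter_upwards [hae] with x hx
            exact le_trans (mul_le_mul_right hx _) (le_of_eq (mul_comm _ _))
        _ = ((p:ℝ≥0∞)+1) * (D * uFn m (⇑T) Ω (((p:ℝ)+1) * s) * Mi m T Ω p s) := by
            rw [lintegral_const_mul _ hUp]
            rfl
        _ ≤ ((p:ℝ≥0∞)+1) * (D * uFn m (⇑T) Ω (((p:ℝ)+1) * s) * (D * Tg m T Ω p s)) :=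
            mul_le_mul_right (mul_le_mul_right hMp _) _
        _ = (D * D) * (((p:ℝ≥0∞)+1) * uFn m (⇑T) Ω (((p:ℝ)+1) * s) * Tg m T Ω p s) := by
            ring
        _ ≤ C * (((p:ℝ≥0∞)+1) * uFn m (⇑T) Ω (((p:ℝ)+1) * s) * Tg m T Ω p s) :=
            mul_le_mul_left hDC _
        _ = C * Tg m T Ω (p+1) s := by rw [Tg_succ]
  -- lower bound statement
  have hB : ∀ p : ℕ, ∀ c : ℝ≥0∞, c < 1 →
      ∀ᶠ s in 𝓝[>] (0:ℝ), c * Tg m T Ω p s ≤ Mi m T Ω p s := by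
    intro p
    induction p with
    | zero =>
      intro c hc
      filter_upwards [self_mem_nhdsWithin] with s _
      rw [Mi_zero m T hΩ1, Tg_zero, mul_one]
      exact hc.le
    | succ p ihp =>
      obtain _ | q := p
      · -- p+1 = 1
        intro c hc
        filter_upwards [self_mem_nhdsWithin] with s _
        have h1 : Tg m T Ω 1 s = uFn m (⇑T) Ω s := by
          rw [show (1:ℕ) = 0 + 1 from rfl, Tg_succ, Tg_zero]
          norm_num
        rw [h1, Mi_one m T hΩ]
        exact le_trans (mul_le_mul_left hc.le _) (by rw [one_mul])
      · -- main case : exponent q+2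
        intro c hc
        have hcne : c ≠ ⊤ := (hc.trans_le le_top).ne
        have hc'1 : c.toReal < 1 := by
          have := (ENNReal.toReal_lt_toReal hcne one_ne_top).2 hc
          rwa [ENNReal.toReal_one] at this
        have hc'0 : (0:ℝ) ≤ c.toReal := ENNReal.toReal_nonneg
        set δ : ℝ := (1 - c.toReal)/5 with hδdef
        have hδ0 : 0 < δ := by rw [hδdef]; linarith
        have hδ1 : δ ≤ 1 := by rw [hδdef]; linarith
        set d : ℝ≥0∞ := ENNReal.ofReal δ with hddef
        have hd0 : d ≠ 0 := by
          rw [hddef, Ne, ENNReal.ofReal_eq_zero, not_le]; exact hδ0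
        have hdt : d ≠ ⊤ := ENNReal.ofReal_ne_top
        have hw : (0:ℝ) < (q:ℝ) + 2 := by positivity
        have hq1 : (0:ℝ) < (q:ℝ) + 1 := by positivity
        have hW0 : ((q:ℝ≥0∞)+2) ≠ 0 := by
          intro h
          have h2 : (2:ℝ≥0∞) ≤ (q:ℝ≥0∞)+2 := le_add_self
          rw [h] at h2; exact absurd h2 (by norm_num)
        have hWt : ((q:ℝ≥0∞)+2) ≠ ⊤ :=
          ENNReal.add_ne_top.2 ⟨ENNReal.natCast_ne_top q, by norm_num⟩
        have hβ0 : (0:ℝ≥0∞) < (d/2) * (d * (4*((q:ℝ≥0∞)+2))⁻¹)^(q+1) := by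
          refine zero_lt_iff.2 (mul_ne_zero ?_ (pow_ne_zero _ (mul_ne_zero hd0 ?_)))
          · rw [div_eq_mul_inv]
            exact mul_ne_zero hd0 (by norm_num)
          · exact ENNReal.inv_ne_zero.2 (mul_ne_top (by norm_num) hWt)
        have h4dlt : 4 / d < ⊤ := ENNReal.div_lt_top (by norm_num) hd0
        filter_upwards [self_mem_nhdsWithin,
          hEss ((q:ℝ)+2) hw 2 one_lt_two,
          ihp (1 - d) (ENNReal.sub_lt_self one_ne_top one_ne_zero hd0),
          hA q 2 one_lt_two,
          hA (q+2) 2 one_lt_two,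
          ((hmeas d (zero_lt_iff.2 hd0)).comp (tendsto_scale hw)).eventually_lt_const hβ0,
          (tendsto_order.1 ((uFn_tendsto_top m T hC hΩ hΩ1).comp
            (tendsto_scale hq1))).1 (4/d) h4dlt]
          with s hs hEs hM1 hMq hM2 hBadm huL
        have hs : (0:ℝ) < s := hs
        have hkey := key_step m T hΩ hΩ1 hMP q hs d hd0 hdt (hEs hs) hM1 hMq hM2
          hBadm.le huL.le
        -- scalar inequality
        have hscal : c + (d + d) ≤ (1-d) * (1-d) := by
          have h1d : (1:ℝ≥0∞) - d = ENNReal.ofReal (1 - δ) := by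
            rw [hddef, ENNReal.ofReal_sub 1 hδ0.le, ENNReal.ofReal_one]
          have hc'' : c = ENNReal.ofReal c.toReal := (ENNReal.ofReal_toReal hcne).symm
          calc c + (d + d) = ENNReal.ofReal (c.toReal + (δ + δ)) := by
                rw [ENNReal.ofReal_add hc'0 (by linarith),
                  ENNReal.ofReal_add hδ0.le hδ0.le, ← hc'', ← hddef]
            _ ≤ ENNReal.ofReal ((1-δ) * (1-δ)) := by
                refine ENNReal.ofReal_le_ofReal ?_
                nlinarith [sq_nonneg δ]
            _ = (1-d) * (1-d) := by
                rw [ENNReal.ofReal_mul (by linarith), h1d]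
        have hfinTg2 : Tg m T Ω (q+1+1) s ≠ ⊤ := Tg_ne_top m T hΩ1 _ hs
        have hcmp : c * Tg m T Ω (q+1+1) s
            + (d * Tg m T Ω (q+1+1) s + d * Tg m T Ω (q+1+1) s)
            ≤ Mi m T Ω (q+1+1) s
            + (d * Tg m T Ω (q+1+1) s + d * Tg m T Ω (q+1+1) s) := by
          refine le_trans ?_ hkey
          calc c * Tg m T Ω (q+1+1) s
              + (d * Tg m T Ω (q+1+1) s + d * Tg m T Ω (q+1+1) s)
              = (c + (d+d)) * Tg m T Ω (q+1+1) s := by ring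
            _ ≤ ((1-d)*(1-d)) * Tg m T Ω (q+1+1) s := mul_le_mul_left hscal _
        exact (ENNReal.add_le_add_iff_right (ENNReal.add_ne_top.2
          ⟨mul_ne_top hdt hfinTg2, mul_ne_top hdt hfinTg2⟩)).1 hcmp
  -- conclusion
  intro p
  have hfun : (fun s : ℝ => (∫⁻ x in Ω, (UFn (⇑T) Ω s x) ^ p ∂m) /
      ((p.factorial : ℝ≥0∞) * ∏ k ∈ Finset.Icc 1 p, uFn m (⇑T) Ω (k * s)))
      = fun s : ℝ => Mi m T Ω p s / Tg m T Ω p s := rfl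
  rw [hfun]
  refine tendsto_order.2 ⟨fun a ha => ?_, fun b hb => ?_⟩
  · obtain ⟨c, hac, hc1⟩ := exists_between ha
    filter_upwards [hB p c hc1, self_mem_nhdsWithin] with s hcb hs
    have hs : (0:ℝ) < s := hs
    refine lt_of_lt_of_le hac ?_
    exact (ENNReal.le_div_iff_mul_le (Or.inl (Tg_ne_zero m T hΩ1 p s))
      (Or.inl (Tg_ne_top m T hΩ1 p hs))).2 hcb
  · obtain ⟨C, h1C, hCb⟩ := exists_between hb
    filter_upwards [hA p C h1C, self_mem_nhdsWithin] with s hMC hs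
    have hs : (0:ℝ) < s := hs
    refine lt_of_le_of_lt ?_ hCb
    exact (ENNReal.div_le_iff_le_mul (Or.inl (Tg_ne_zero m T hΩ1 p s))
      (Or.inl (Tg_ne_top m T hΩ1 p hs))).2 hMC
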